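/- Let G be a finite simple graph on vertex set V with |V| ≥ 2. Then G admits a linked order if and only if there exist two adjacent vertices a and b such that, for every set S of vertices with {a, b} ⊆ S and S ≠ V, there exists a vertex c ∉ S having at least two neighbors in S. -/

import Mathlib

/-- A linked order of a finite simple graph `G` is an enumeration of all vertices
(as a duplicate-free list containing every vertex) such that the first two vertices
are adjacent and every vertex in position `i ≥ 3` (1-indexed; i.e., preceded by at
least two vertices) has at least two neighbors among the preceding vertices. -/
def IsLinkedOrder {V : Type*} [Fintype V] [DecidableEq V]
    (G : SimpleGraph V) [DecidableRel G.Adj] (l : List V) : Prop :=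
  (∀ v : V, v ∈ l) ∧ l.Nodup ∧
  (∀ a b rest, l = a :: b :: rest → G.Adj a b) ∧
  (∀ pre c suf, l = pre ++ c :: suf → 2 ≤ pre.length →
    2 ≤ (pre.toFinset ∩ G.neighborFinset c).card)

lemma exists_split_of_not_all {α : Type*} {p : α → Prop} [DecidablePred p] :
    ∀ l : List α, (∃ v ∈ l, ¬ p v) →
      ∃ pre c suf, l = pre ++ c :: suf ∧ (∀ x ∈ pre, p x) ∧ ¬ p c := by
  intro l
  induction l with
  | nil => simp
  | cons x t ih =>
    intro h
    by_cases hx : p x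
    · obtain ⟨v, hv, hpv⟩ := h
      have hvt : v ∈ t := by
        rcases List.mem_cons.mp hv with rfl | h'
        · exact absurd hx hpv
        · exact h'
      obtain ⟨pre, c, suf, h1, h2, h3⟩ := ih ⟨v, hvt, hpv⟩
      refine ⟨x :: pre, c, suf, by simp [h1], ?_, h3⟩
      intro y hy
      rcases List.mem_cons.mp hy with rfl | h'
      · exact hx
      · exact h2 y h'
    · exact ⟨[], x, t, rfl, by simp, hx⟩

lemma finish_linked {V : Type*} [Fintype V] [DecidableEq V]
    (G : SimpleGraph V) [DecidableRel G.Adj] {a b : V} {rest l : List V}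
    (hab : G.Adj a b) (hl : l = a :: b :: rest) (hnd : l.Nodup)
    (hu : l.toFinset = Finset.univ)
    (h4 : ∀ pre c suf, l = pre ++ c :: suf → 2 ≤ pre.length →
      2 ≤ (pre.toFinset ∩ G.neighborFinset c).card) :
    IsLinkedOrder G l := by
  refine ⟨?_, hnd, ?_, h4⟩
  · intro v; rw [← List.mem_toFinset, hu]; exact Finset.mem_univ v
  · intro a' b' rest' h
    rw [hl] at h
    injection h with h1 h
    injection h with h2 h
    subst h1; subst h2; exact hab

lemma build_linked {V : Type*} [Fintype V] [DecidableEq V]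
    (G : SimpleGraph V) [DecidableRel G.Adj] {a b : V} (hab : G.Adj a b)
    (hS : ∀ S : Finset V, a ∈ S → b ∈ S → S ≠ Finset.univ →
      ∃ c ∉ S, 2 ≤ (G.neighborFinset c ∩ S).card) :
    ∀ n (l rest : List V), l = a :: b :: rest → l.Nodup →
      l.toFinset.card + n = Fintype.card V →
      (∀ pre c suf, l = pre ++ c :: suf → 2 ≤ pre.length →
        2 ≤ (pre.toFinset ∩ G.neighborFinset c).card) →
      ∃ l', IsLinkedOrder G l' := by
  intro n
  induction n with
  | zero =>
    intro l rest hl hnd hcard h4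
    have hu : l.toFinset = Finset.univ :=
      Finset.eq_univ_of_card _ (by simpa using hcard)
    exact ⟨l, finish_linked G hab hl hnd hu h4⟩
  | succ n ih =>
    intro l rest hl hnd hcard h4
    by_cases hu : l.toFinset = Finset.univ
    · exact ⟨l, finish_linked G hab hl hnd hu h4⟩
    · obtain ⟨c, hc, hc2⟩ := hS l.toFinset (by simp [hl]) (by simp [hl]) hu
      have hcl : c ∉ l := by simpa using hc
      have hnd' : (l ++ [c]).Nodup := by
        rw [List.nodup_append]
        exact ⟨hnd, List.nodup_singleton c, by simpa using (fun x hx (h : x = c) => hcl (h ▸ hx))⟩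
      refine ih (l ++ [c]) (rest ++ [c]) (by simp [hl]) hnd' ?_ ?_
      · have : (l ++ [c]).toFinset = insert c l.toFinset := by
          ext x; simp [or_comm]
        rw [this, Finset.card_insert_of_notMem (by simpa using hcl)]
        omega
      · intro pre c' suf h h2
        rcases suf.eq_nil_or_concat with rfl | ⟨suf', d, rfl⟩
        · obtain ⟨h1, h2'⟩ := List.append_inj' h (by simp)
          have hcc : c' = c := by simpa using h2'.symm
          rw [← h1, hcc, Finset.inter_comm]
          exact hc2
        · have h' : l ++ [c] = (pre ++ c' :: suf') ++ [d] := by simpa using h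
          obtain ⟨h1, h2'⟩ := List.append_inj' h' (by simp)
          exact h4 pre c' suf' h1 h2

/-- `G` admits a linked order iff there are two adjacent vertices `a, b` such that
every vertex set `S` with `{a,b} ⊆ S ≠ V` admits a vertex outside `S` with at least
two neighbors in `S`. -/
theorem linked_order_iff {V : Type*} [Fintype V] [DecidableEq V]
    (G : SimpleGraph V) [DecidableRel G.Adj] (hm : 2 ≤ Fintype.card V) :
    (∃ l : List V, IsLinkedOrder G l) ↔
      (∃ a b : V, G.Adj a b ∧ ∀ S : Finset V, a ∈ S → b ∈ S → S ≠ Finset.univ →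
        ∃ c ∉ S, 2 ≤ (G.neighborFinset c ∩ S).card) := by
  constructor
  · rintro ⟨l, h1, h2, h3, h4⟩
    have hlen : l.length = Fintype.card V := by
      rw [← List.toFinset_card_of_nodup h2]
      congr 1
      exact Finset.eq_univ_of_forall (fun v => List.mem_toFinset.mpr (h1 v))
    match l, h1, h2, h3, h4 with
    | [], h1, _, _, _ => simp_all; omega
    | [x], h1, _, _, _ => simp_all; omega
    | a :: b :: rest, h1, h2, h3, h4 =>
      refine ⟨a, b, h3 a b rest rfl, ?_⟩
      intro S haS hbS hSu
      obtain ⟨v, hv⟩ : ∃ v, v ∉ S := by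
        by_contra h
        push_neg at h
        exact hSu (Finset.eq_univ_of_forall h)
      obtain ⟨pre, c, suf, hsp, hpre, hc⟩ :=
        exists_split_of_not_all (p := (· ∈ S)) (a :: b :: rest) ⟨v, h1 v, hv⟩
      have hlen2 : 2 ≤ pre.length := by
        match pre, hsp, hpre with
        | [], hsp, _ =>
          injection hsp with e _
          exact absurd (e ▸ haS) hc
        | [x], hsp, _ =>
          injection hsp with e hsp
          injection hsp with e2 _
          exact absurd (e2 ▸ hbS) hc
        | x :: y :: pre', _, _ => simp
      have key := h4 pre c suf hsp hlen2
      refine ⟨c, hc, le_trans key (Finset.card_le_card ?_)⟩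
      intro x hx
      rw [Finset.mem_inter] at hx ⊢
      exact ⟨hx.2, hpre x (List.mem_toFinset.mp hx.1)⟩
  · rintro ⟨a, b, hab, hS⟩
    have hnd : ([a, b] : List V).Nodup := by simp [hab.ne]
    refine build_linked G hab hS (Fintype.card V - 2) [a, b] [] rfl hnd ?_ ?_
    · rw [List.toFinset_card_of_nodup hnd]
      simp; omega
    · intro pre c suf h h2
      have := congrArg List.length h
      simp at this
      omega
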